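/- The rational function identity $\frac{1}{1-u t^n x_1}\prod_{i=1}^N \frac{1 - u t^n x_i}{1 - u x_i} = \frac{1}{1-u x_1}\prod_{l=2}^N \frac{x_1 - t^n x_l}{x_1 - x_l} + \sum_{j=2}^N \frac{(t^n - 1)x_j}{(1 - u x_j)(x_1 - x_j)}\prod_{l=2, l\neq j}^N \frac{x_j - t^n x_l}{x_j - x_l}$ holds in the variable $u$. -/

import Mathlib

open Finset

private lemma dell_aux {K : Type*} [Field K] (c : K) (N : ℕ) (hN : 1 ≤ N) :
    ∀ (x : ℕ → K),
      (∀ i ∈ Finset.Icc 1 N, ∀ j ∈ Finset.Icc 1 N, i ≠ j → x i ≠ x j) →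
      ∀ u : K, (∀ i ∈ Finset.Icc 1 N, 1 - u * x i ≠ 0) →
      1 / (1 - u * x 1) * ∏ i ∈ Finset.Icc 2 N, (1 - u * c * x i) / (1 - u * x i)
        = 1 / (1 - u * x 1) * ∏ l ∈ Finset.Icc 2 N, (x 1 - c * x l) / (x 1 - x l)
          + ∑ j ∈ Finset.Icc 2 N,
              (c - 1) * x j / ((1 - u * x j) * (x 1 - x j)) *
                ∏ l ∈ (Finset.Icc 2 N).erase j, (x j - c * x l) / (x j - x l) := by
  induction N, hN using Nat.le_induction with
  | base =>
    intro x _ u _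
    rw [show Finset.Icc 2 1 = ∅ from Finset.Icc_eq_empty (by omega)]
    simp
  | succ N hN ih =>
    intro x hdist u hu
    have hmem : ∀ i : ℕ, i ∈ Icc 1 N → i ∈ Icc 1 (N+1) := by
      intro i hi; simp only [mem_Icc] at *; omega
    have hdistN : ∀ i ∈ Icc 1 N, ∀ j ∈ Icc 1 N, i ≠ j → x i ≠ x j :=
      fun i hi j hj => hdist i (hmem i hi) j (hmem j hj)
    have huN : ∀ i ∈ Icc 1 N, 1 - u * x i ≠ 0 := fun i hi => hu i (hmem i hi)
    have hmemN1 : (N+1) ∈ Icc 1 (N+1) := by simp only [mem_Icc]; omega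
    have hSne : ∀ j ∈ Icc 1 N, x j - x (N+1) ≠ 0 := by
      intro j hj
      refine sub_ne_zero.mpr (hdist j (hmem j hj) (N+1) hmemN1 ?_)
      simp only [mem_Icc] at hj; omega
    have hSne' : ∀ j ∈ Icc 1 N, x (N+1) - x j ≠ 0 := by
      intro j hj
      refine sub_ne_zero.mpr (hdist (N+1) hmemN1 j (hmem j hj) ?_)
      simp only [mem_Icc] at hj; omega
    have h1mem : (1:ℕ) ∈ Icc 1 N := by simp only [mem_Icc]; omega
    have hx1w : x 1 - x (N+1) ≠ 0 := hSne 1 h1mem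
    have h1u1 : 1 - u * x 1 ≠ 0 := huN 1 h1mem
    have h1uw : 1 - u * x (N+1) ≠ 0 := hu (N+1) hmemN1
    have hnotmem : (N+1) ∉ Icc 2 N := by simp [mem_Icc]
    have hmem2 : ∀ j ∈ Icc 2 N, j ∈ Icc 1 N := by intro j hj; simp only [mem_Icc] at *; omega
    have hx1j : ∀ j ∈ Icc 2 N, x 1 - x j ≠ 0 := by
      intro j hj
      refine sub_ne_zero.mpr (hdist 1 (hmem 1 h1mem) j (hmem j (hmem2 j hj)) ?_)
      simp only [mem_Icc] at hj; omega
    have huj : ∀ j ∈ Icc 2 N, 1 - u * x j ≠ 0 := fun j hj => huN j (hmem2 j hj)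
    have hicc : Icc 2 (N+1) = insert (N+1) (Icc 2 N) := by
      ext k; simp only [mem_Icc, mem_insert]; omega
    rw [hicc, Finset.prod_insert hnotmem, Finset.prod_insert hnotmem,
        Finset.sum_insert hnotmem, Finset.erase_insert hnotmem]
    have hsumrw : ∑ j ∈ Icc 2 N,
          (c - 1) * x j / ((1 - u * x j) * (x 1 - x j)) *
            ∏ l ∈ (insert (N+1) (Icc 2 N)).erase j, (x j - c * x l) / (x j - x l)
        = ∑ j ∈ Icc 2 N,
          (c - 1) * x j / ((1 - u * x j) * (x 1 - x j)) *
            ((x j - c * x (N+1)) / (x j - x (N+1)) *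
              ∏ l ∈ (Icc 2 N).erase j, (x j - c * x l) / (x j - x l)) := by
      refine Finset.sum_congr rfl fun j hj => ?_
      have hne : (N+1) ≠ j := by simp only [mem_Icc] at hj; omega
      rw [Finset.erase_insert_of_ne hne,
        Finset.prod_insert (fun h => hnotmem (Finset.mem_of_mem_erase h))]
    rw [hsumrw]
    have hIH := ih x hdistN u huN
    -- the residue identity
    have hclaim : (c - 1) * x (N+1) / ((1 - u * x (N+1)) * (x 1 - x (N+1))) *
          ∏ l ∈ Icc 2 N, (x (N+1) - c * x l) / (x (N+1) - x l)
        = (c - 1) * x (N+1) / ((1 - u * x (N+1)) * (x 1 - x (N+1))) *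
            ∏ l ∈ Icc 2 N, (x 1 - c * x l) / (x 1 - x l)
          + ∑ j ∈ Icc 2 N,
              ((c - 1) * x j / (x 1 - x j) *
                ((c - 1) * x (N+1) / ((1 - u * x (N+1)) * (x j - x (N+1))))) *
                ∏ l ∈ (Icc 2 N).erase j, (x j - c * x l) / (x j - x l) := by
      rcases eq_or_ne (x (N+1)) 0 with hw0 | hw0
      · rw [hw0]; simp
      · have hwx1 : x (N+1) - x 1 ≠ 0 := hSne' 1 h1mem
        have hinv : ∀ i ∈ Icc 1 N, (1:K) - (x (N+1))⁻¹ * x i = (x (N+1) - x i) / x (N+1) := by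
          intro i hi; field_simp
        have hu0 : ∀ i ∈ Icc 1 N, 1 - (x (N+1))⁻¹ * x i ≠ 0 := by
          intro i hi
          rw [hinv i hi]
          exact div_ne_zero (hSne' i hi) hw0
        have hih0 := ih x hdistN (x (N+1))⁻¹ hu0
        have e1 : ∏ i ∈ Icc 2 N, (1 - (x (N+1))⁻¹ * c * x i) / (1 - (x (N+1))⁻¹ * x i)
            = ∏ i ∈ Icc 2 N, (x (N+1) - c * x i) / (x (N+1) - x i) := by
          refine Finset.prod_congr rfl fun i hi => ?_
          rw [div_eq_div_iff (hu0 i (hmem2 i hi)) (hSne' i (hmem2 i hi))]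
          field_simp
        rw [e1, hinv 1 h1mem] at hih0
        have e2 : ∑ j ∈ Icc 2 N,
              (c - 1) * x j / ((1 - (x (N+1))⁻¹ * x j) * (x 1 - x j)) *
                ∏ l ∈ (Icc 2 N).erase j, (x j - c * x l) / (x j - x l)
            = ∑ j ∈ Icc 2 N,
              (c - 1) * x j * x (N+1) / ((x (N+1) - x j) * (x 1 - x j)) *
                ∏ l ∈ (Icc 2 N).erase j, (x j - c * x l) / (x j - x l) := by
          refine Finset.sum_congr rfl fun j hj => ?_
          rw [hinv j (hmem2 j hj)]
          congr 1
          have h1 := hSne' j (hmem2 j hj)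
          have h2 := hx1j j hj
          field_simp
        rw [e2, one_div_div] at hih0
        have hco : ∀ P : K, (-(c - 1) / (1 - u * x (N+1))) * (x (N+1) / (x (N+1) - x 1) * P)
            = (c - 1) * x (N+1) / ((1 - u * x (N+1)) * (x 1 - x (N+1))) * P := by
          intro P
          rw [show (-(c - 1) / (1 - u * x (N+1))) * (x (N+1) / (x (N+1) - x 1) * P)
              = ((-(c - 1) / (1 - u * x (N+1))) * (x (N+1) / (x (N+1) - x 1))) * P from by ring]
          congr 1
          field_simp
          ring
        have hk := congrArg (fun z => (-(c - 1) / (1 - u * x (N+1))) * z) hih0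
        simp only [mul_add, Finset.mul_sum] at hk
        rw [← hco, ← hco, hk, hco]
        congr 1
        refine Finset.sum_congr rfl fun j hj => ?_
        have h1 := hSne j (hmem2 j hj)
        have h1' := hSne' j (hmem2 j hj)
        have h2 := hx1j j hj
        rw [show (-(c - 1) / (1 - u * x (N+1))) *
              ((c - 1) * x j * x (N+1) / ((x (N+1) - x j) * (x 1 - x j)) *
                ∏ l ∈ (Icc 2 N).erase j, (x j - c * x l) / (x j - x l))
            = ((-(c - 1) / (1 - u * x (N+1))) *
                ((c - 1) * x j * x (N+1) / ((x (N+1) - x j) * (x 1 - x j)))) *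
                ∏ l ∈ (Icc 2 N).erase j, (x j - c * x l) / (x j - x l) from by ring]
        congr 1
        field_simp
        ring
    calc 1 / (1 - u * x 1) *
          ((1 - u * c * x (N+1)) / (1 - u * x (N+1)) *
            ∏ i ∈ Icc 2 N, (1 - u * c * x i) / (1 - u * x i))
        = (1 / (1 - u * x 1) * ∏ i ∈ Icc 2 N, (1 - u * c * x i) / (1 - u * x i)) *
            ((1 - u * c * x (N+1)) / (1 - u * x (N+1))) := by ring
      _ = (1 / (1 - u * x 1) * ∏ l ∈ Icc 2 N, (x 1 - c * x l) / (x 1 - x l)) *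
            ((1 - u * c * x (N+1)) / (1 - u * x (N+1)))
          + (∑ j ∈ Icc 2 N,
              (c - 1) * x j / ((1 - u * x j) * (x 1 - x j)) *
                ∏ l ∈ (Icc 2 N).erase j, (x j - c * x l) / (x j - x l)) *
            ((1 - u * c * x (N+1)) / (1 - u * x (N+1))) := by
          rw [hIH, add_mul]
      _ = (1 / (1 - u * x 1) *
              ((x 1 - c * x (N+1)) / (x 1 - x (N+1)) *
                ∏ l ∈ Icc 2 N, (x 1 - c * x l) / (x 1 - x l))
            + (c - 1) * x (N+1) / ((1 - u * x (N+1)) * (x 1 - x (N+1))) *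
                ∏ l ∈ Icc 2 N, (x 1 - c * x l) / (x 1 - x l))
          + ∑ j ∈ Icc 2 N,
              ((c - 1) * x j / ((1 - u * x j) * (x 1 - x j)) *
                ((x j - c * x (N+1)) / (x j - x (N+1)) *
                  ∏ l ∈ (Icc 2 N).erase j, (x j - c * x l) / (x j - x l))
               + ((c - 1) * x j / (x 1 - x j) *
                  ((c - 1) * x (N+1) / ((1 - u * x (N+1)) * (x j - x (N+1))))) *
                  ∏ l ∈ (Icc 2 N).erase j, (x j - c * x l) / (x j - x l)) := by
          have hT1 : ∀ Q : K, 1 / (1 - u * x 1) * Q * ((1 - u * c * x (N+1)) / (1 - u * x (N+1)))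
              = 1 / (1 - u * x 1) * ((x 1 - c * x (N+1)) / (x 1 - x (N+1)) * Q)
                + (c - 1) * x (N+1) / ((1 - u * x (N+1)) * (x 1 - x (N+1))) * Q := by
            intro Q
            field_simp
            ring
          have hTj : ∀ j ∈ Icc 2 N, ∀ P : K,
              (c - 1) * x j / ((1 - u * x j) * (x 1 - x j)) * P *
                  ((1 - u * c * x (N+1)) / (1 - u * x (N+1)))
                = (c - 1) * x j / ((1 - u * x j) * (x 1 - x j)) *
                    ((x j - c * x (N+1)) / (x j - x (N+1)) * P)
                  + (c - 1) * x j / (x 1 - x j) *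
                      ((c - 1) * x (N+1) / ((1 - u * x (N+1)) * (x j - x (N+1)))) * P := by
            intro j hj P
            have h1 := hSne j (hmem2 j hj)
            have h2 := hx1j j hj
            have h3 := huj j hj
            field_simp
            linear_combination (x j * P * x (N+1) * (c - 1) ^ 2) * inv_mul_cancel₀ h3
          rw [Finset.sum_mul, hT1, Finset.sum_congr rfl fun j hj => hTj j hj _]
      _ = 1 / (1 - u * x 1) *
            ((x 1 - c * x (N+1)) / (x 1 - x (N+1)) *
              ∏ l ∈ Icc 2 N, (x 1 - c * x l) / (x 1 - x l))
          + ((c - 1) * x (N+1) / ((1 - u * x (N+1)) * (x 1 - x (N+1))) *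
              ∏ l ∈ Icc 2 N, (x (N+1) - c * x l) / (x (N+1) - x l)
            + ∑ j ∈ Icc 2 N,
                (c - 1) * x j / ((1 - u * x j) * (x 1 - x j)) *
                  ((x j - c * x (N+1)) / (x j - x (N+1)) *
                    ∏ l ∈ (Icc 2 N).erase j, (x j - c * x l) / (x j - x l))) := by
          rw [Finset.sum_add_distrib, hclaim]
          ring

theorem dell_identity_Wn {K : Type*} [Field K] (t : K) (ht : t ≠ 0)
    (m : ℤ) (N : ℕ) (hN : 1 ≤ N) (x : ℕ → K) (u : K)
    (hdist : ∀ i ∈ Finset.Icc 1 N, ∀ j ∈ Finset.Icc 1 N, i ≠ j → x i ≠ x j)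
    (hu : ∀ i ∈ Finset.Icc 1 N, 1 - u * x i ≠ 0)
    (hu1 : 1 - u * t ^ m * x 1 ≠ 0) :
    (1 / (1 - u * t ^ m * x 1)) *
        ∏ i ∈ Finset.Icc 1 N, (1 - u * t ^ m * x i) / (1 - u * x i)
      = (1 / (1 - u * x 1)) *
          ∏ l ∈ Finset.Icc 2 N, (x 1 - t ^ m * x l) / (x 1 - x l)
        + ∑ j ∈ Finset.Icc 2 N,
            ((t ^ m - 1) * x j) / ((1 - u * x j) * (x 1 - x j)) *
              ∏ l ∈ (Finset.Icc 2 N).erase j, (x j - t ^ m * x l) / (x j - x l) := by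
  have h1notin : (1:ℕ) ∉ Finset.Icc 2 N := by simp [Finset.mem_Icc]
  have hsplit : Finset.Icc 1 N = insert 1 (Finset.Icc 2 N) := by
    ext k; simp only [Finset.mem_Icc, Finset.mem_insert]; omega
  have key := dell_aux (t ^ m) N hN x hdist u hu
  have h1u1 : 1 - u * x 1 ≠ 0 := hu 1 (by simp [Finset.mem_Icc]; omega)
  rw [hsplit, Finset.prod_insert h1notin]
  rw [show (1:K) / (1 - u * t ^ m * x 1) *
        ((1 - u * t ^ m * x 1) / (1 - u * x 1) *
          ∏ i ∈ Finset.Icc 2 N, (1 - u * t ^ m * x i) / (1 - u * x i))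
      = 1 / (1 - u * x 1) * ∏ i ∈ Finset.Icc 2 N, (1 - u * t ^ m * x i) / (1 - u * x i) from by
    field_simp]
  exact key
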